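/- Let W be the union of a nonzero subgroup nℤ (n ≠ 0) of ℤ and a finite subset of ℤ, with ℤ \ W infinite. Then W admits a minimal asymptotic complement in ℤ. -/

import Mathlib

open Pointwise

def IsAddAsympCompl (W C : Set ℤ) : Prop :=
  C.Nonempty ∧ ((Set.univ : Set ℤ) \ (W + C)).Finite

def IsAddMinAsympCompl (W C : Set ℤ) : Prop :=
  IsAddAsympCompl W C ∧ ∀ c ∈ C, ¬ IsAddAsympCompl W (C \ {c})

theorem stmt_8 (n : ℤ) (hn : n ≠ 0) (F : Set ℤ) (hF : F.Finite)
    (W : Set ℤ) (hW : W = {x : ℤ | n ∣ x} ∪ F)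
    (hWc : ((Set.univ : Set ℤ) \ W).Infinite) :
    ∃ C : Set ℤ, IsAddMinAsympCompl W C := by
  classical
  have hnpos : (0:ℤ) < |n| := abs_pos.mpr hn
  -- a finite asymptotic complement exists
  have key : IsAddAsympCompl W ((Finset.Icc (0:ℤ) (|n|-1) : Finset ℤ) : Set ℤ) := by
    constructor
    · exact ⟨0, by simp [Finset.mem_Icc]; omega⟩
    · have hcov : Set.univ ⊆ W + ((Finset.Icc (0:ℤ) (|n|-1) : Finset ℤ) : Set ℤ) := by
        intro x _
        refine ⟨x - x % n, ?_, x % n, ?_, by ring⟩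
        · rw [hW]; left
          exact ⟨x / n, by have := Int.mul_ediv_add_emod x n; linarith⟩
        · have h1 : 0 ≤ x % n := Int.emod_nonneg x hn
          have h2 : x % n < |n| := Int.emod_lt_abs x hn
          simp [Finset.mem_Icc]; omega
      have : (Set.univ : Set ℤ) \ (W + ((Finset.Icc (0:ℤ) (|n|-1) : Finset ℤ) : Set ℤ)) = ∅ :=
        Set.diff_eq_empty.mpr hcov
      rw [this]; exact Set.finite_empty
  let P : ℕ → Prop := fun k => ∃ D : Finset ℤ, D.card = k ∧ IsAddAsympCompl W ↑D
  have hP : ∃ k, P k := ⟨_, Finset.Icc (0:ℤ) (|n|-1), rfl, key⟩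
  obtain ⟨D₀, hcard, hD₀⟩ := Nat.find_spec hP
  refine ⟨↑D₀, hD₀, ?_⟩
  intro c hc hcontra
  have hcD : c ∈ D₀ := hc
  have hcoe : ((D₀ : Set ℤ) \ {c}) = ↑(D₀.erase c) := by
    simp [Finset.coe_erase]
  rw [hcoe] at hcontra
  have hlt : (D₀.erase c).card < Nat.find hP := by
    rw [← hcard]
    exact Finset.card_erase_lt_of_mem hcD
  exact Nat.find_min hP hlt ⟨D₀.erase c, rfl, hcontra⟩
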